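/- arXiv:2105.04833 — 5 statements merged into one kernel-verified Lean document; each statement's English description precedes it below -/
import Mathlib

section
/- Let f : ℝ → ℝ be non-decreasing, let ν̄ ∈ ℝ, and suppose ν₁* ≤ ν̄ ≤ ν₂* (with ν₁* < ν₂*) satisfy: for all ν ≥ ν̄, (f(ν) - f(ν₁*))/(ν - ν₁*) ≤ (f(ν₂*) - f(ν₁*))/(ν₂* - ν₁*), and for all ν ≤ ν̄, (f(ν₂*) - f(ν₁*))/(ν₂* - ν₁*) ≤ (f(ν₂*) - f(ν))/(ν₂* - ν). Then the linear function g(ν) = f(ν₁*) + σ·(ν - ν₁*), where σ = (f(ν₂*) - f(ν₁*))/(ν₂* - ν₁*), satisfies g(ν) ≥ f(ν) for all ν ∈ ℝ. -/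
open Set

theorem stmt_0 (f : ℝ → ℝ) (hf : Monotone f) (νbar ν₁ ν₂ : ℝ)
    (h12 : ν₁ < ν₂) (h1 : ν₁ ≤ νbar) (h2 : νbar ≤ ν₂)
    (hA : ∀ ν, νbar ≤ ν → (f ν - f ν₁) / (ν - ν₁) ≤ (f ν₂ - f ν₁) / (ν₂ - ν₁))
    (hB : ∀ ν, ν ≤ νbar → (f ν₂ - f ν₁) / (ν₂ - ν₁) ≤ (f ν₂ - f ν) / (ν₂ - ν)) :
    ∀ ν : ℝ, f ν ≤ f ν₁ + (f ν₂ - f ν₁) / (ν₂ - ν₁) * (ν - ν₁) := by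
  intro ν
  set σ := (f ν₂ - f ν₁) / (ν₂ - ν₁) with hσ
  have hne : ν₂ - ν₁ ≠ 0 := by linarith
  have hσmul : σ * (ν₂ - ν₁) = f ν₂ - f ν₁ := div_mul_cancel₀ _ hne
  rcases le_or_gt ν νbar with hle | hgt
  · -- use hB; need ν < ν₂ or ν = ν₂ (then ν = νbar = ν₂)
    rcases lt_or_eq_of_le (hle.trans h2) with hlt | heq
    · have h := hB ν hle
      have hpos : 0 < ν₂ - ν := by linarith
      have := (div_le_div_iff₀ (by linarith : (0:ℝ) < ν₂ - ν₁) hpos).mp h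
      nlinarith
    · subst heq
      have h := hA ν h2
      rw [div_le_div_iff₀ (by linarith) (by linarith)] at h
      nlinarith
  · have h := hA ν hgt.le
    have hν1 : ν₁ < ν := lt_of_le_of_lt h1 hgt
    rw [div_le_div_iff₀ (by linarith) (by linarith)] at h
    nlinarith
end

section
/- Let f : ℝ → ℝ be non-decreasing and let ν be a real-valued random variable with finite mean ν̄ = E[ν]. Suppose ν₁* < ν̄ < ν₂* are such that the line g through (ν₁*, f(ν₁*)) and (ν₂*, f(ν₂*)) satisfies g(ν) ≥ f(ν) for all ν. Then E[f(ν)] ≤ β f(ν₁*) + (1-β) f(ν₂*), where β = (ν₂* - ν̄)/(ν₂* - ν₁*). -/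
open MeasureTheory

theorem stmt_1 {Ω : Type*} [MeasurableSpace Ω] (μ : Measure Ω) [IsProbabilityMeasure μ]
    (f : ℝ → ℝ) (hf : Monotone f) (X : Ω → ℝ) (hX : Integrable X μ)
    (hfX : Integrable (fun ω => f (X ω)) μ)
    (νbar ν₁ ν₂ : ℝ) (hmean : ∫ ω, X ω ∂μ = νbar)
    (h1 : ν₁ < νbar) (h2 : νbar < ν₂)
    (hmaj : ∀ ν : ℝ, f ν ≤ f ν₁ + (f ν₂ - f ν₁) / (ν₂ - ν₁) * (ν - ν₁)) :
    ∫ ω, f (X ω) ∂μ ≤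
      (ν₂ - νbar) / (ν₂ - ν₁) * f ν₁ + (1 - (ν₂ - νbar) / (ν₂ - ν₁)) * f ν₂ := by
  set c : ℝ := (f ν₂ - f ν₁) / (ν₂ - ν₁) with hc
  have hint : Integrable (fun ω => f ν₁ + c * (X ω - ν₁)) μ := by
    apply Integrable.add (integrable_const _)
    exact ((hX.sub (integrable_const _)).const_mul c)
  have hle : ∫ ω, f (X ω) ∂μ ≤ ∫ ω, f ν₁ + c * (X ω - ν₁) ∂μ :=
    integral_mono hfX hint fun ω => hmaj (X ω)
  have hcalc : ∫ ω, f ν₁ + c * (X ω - ν₁) ∂μ = f ν₁ + c * (νbar - ν₁) := by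
    have hg : Integrable (fun ω => c * (X ω - ν₁)) μ :=
      (hX.sub (integrable_const _)).const_mul c
    rw [integral_add (integrable_const _) hg, MeasureTheory.integral_const_mul]
    have : ∫ ω, X ω - ν₁ ∂μ = νbar - ν₁ := by
      rw [integral_sub hX (integrable_const _), hmean, integral_const]; simp
    rw [this, integral_const]; simp
  rw [hcalc] at hle
  refine hle.trans_eq ?_
  have hne : ν₂ - ν₁ ≠ 0 := by linarith
  rw [hc]
  field_simp [hc]
  ring
end

section
/- Let f : ℝ → ℝ be non-decreasing and let A_ν > 0. Consider the problem of maximizing E[f(ν)] over distributions of a random variable ν ≥ 0 subject to E[ν] ≤ A_ν. If f is convex on [0, A_s] for some A_s > A_ν and constant equal to f(A_s) on [A_s, ∞), then the optimal value equals β f(0) + (1-β) f(A_s) with β = (A_s - A_ν)/A_s, achieved by the two-point distribution placing mass β at 0 and 1-β at A_s. -/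
open MeasureTheory

theorem stmt_5 (f : ℝ → ℝ) (hf : Monotone f) (A_ν A_s : ℝ) (hAν : 0 < A_ν)
    (hAs : A_ν < A_s)
    (hconv : ConvexOn ℝ (Set.Icc 0 A_s) f)
    (hsat : ∀ x : ℝ, A_s ≤ x → f x = f A_s) :
    let β : ℝ := (A_s - A_ν) / A_s
    let μ₀ : Measure ℝ :=
      ENNReal.ofReal β • Measure.dirac 0 + ENNReal.ofReal (1 - β) • Measure.dirac A_s
    IsGreatest
      {r : ℝ | ∃ μ : Measure ℝ, IsProbabilityMeasure μ ∧ (∀ᵐ x ∂μ, 0 ≤ x) ∧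
        Integrable (fun x : ℝ => x) μ ∧ (∫ x, x ∂μ) ≤ A_ν ∧
        Integrable f μ ∧ r = ∫ x, f x ∂μ}
      (β * f 0 + (1 - β) * f A_s) ∧
    IsProbabilityMeasure μ₀ ∧ (∫ x, x ∂μ₀) ≤ A_ν ∧
    (∫ x, f x ∂μ₀) = β * f 0 + (1 - β) * f A_s := by
  intro β μ₀
  have hAs0 : (0:ℝ) < A_s := hAν.trans hAs
  have hβ0 : 0 ≤ β := le_of_lt (div_pos (sub_pos.2 hAs) hAs0)
  have hβ1 : 1 - β = A_ν / A_s := by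
    show 1 - (A_s - A_ν) / A_s = A_ν / A_s
    rw [sub_div, div_self hAs0.ne']; ring
  have h1β0 : 0 ≤ 1 - β := by rw [hβ1]; positivity
  -- generic integral over μ₀
  have hne1 : ENNReal.ofReal β ≠ ⊤ := ENNReal.ofReal_ne_top
  have hne2 : ENNReal.ofReal (1 - β) ≠ ⊤ := ENNReal.ofReal_ne_top
  have hid : ∀ (g : ℝ → ℝ) (a : ℝ), Integrable g (Measure.dirac a) := fun g a =>
    (integrable_const (g a)).congr (by simp [ae_dirac_eq, Filter.EventuallyEq])
  have hint : ∀ g : ℝ → ℝ, Integrable g μ₀ := by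
    intro g
    exact ((hid g 0).smul_measure hne1).add_measure ((hid g A_s).smul_measure hne2)
  have key : ∀ g : ℝ → ℝ, (∫ x, g x ∂μ₀) = β * g 0 + (1 - β) * g A_s := by
    intro g
    rw [show μ₀ = ENNReal.ofReal β • Measure.dirac 0
        + ENNReal.ofReal (1 - β) • Measure.dirac A_s from rfl,
      integral_add_measure ((hid g 0).smul_measure hne1)
        ((hid g A_s).smul_measure hne2),
      integral_smul_measure, integral_smul_measure, integral_dirac, integral_dirac,
      ENNReal.toReal_ofReal hβ0, ENNReal.toReal_ofReal h1β0]
    simp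
  have hprob : IsProbabilityMeasure μ₀ := by
    constructor
    simp [μ₀, ← ENNReal.ofReal_add hβ0 h1β0]
  have hx : (∫ x, x ∂μ₀) = A_ν := by
    rw [key (fun x => x), hβ1]
    field_simp
    simp
  have hfx : (∫ x, f x ∂μ₀) = β * f 0 + (1 - β) * f A_s := key f
  have hae : ∀ᵐ x ∂μ₀, 0 ≤ x := by
    rw [show μ₀ = ENNReal.ofReal β • Measure.dirac 0
        + ENNReal.ofReal (1 - β) • Measure.dirac A_s from rfl, ae_add_measure_iff]
    constructor <;> apply Measure.ae_smul_measure <;>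
      simp [ae_dirac_eq, hAs0.le]
  refine ⟨⟨⟨μ₀, hprob, hae, hint _, hx.le, hint f, hfx.symm⟩, ?_⟩, hprob, hx.le, hfx⟩
  -- upper bound
  rintro r ⟨μ, hμp, hμae, hμid, hμx, hμf, rfl⟩
  set c : ℝ := (f A_s - f 0) / A_s with hc
  have hc0 : 0 ≤ c := div_nonneg (sub_nonneg.2 (hf hAs0.le)) hAs0.le
  have hpt : ∀ x : ℝ, 0 ≤ x → f x ≤ f 0 + c * x := by
    intro x hx0
    rcases le_or_gt x A_s with hxA | hxA
    · have ht0 : 0 ≤ x / A_s := div_nonneg hx0 hAs0.le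
      have ht1 : x / A_s ≤ 1 := (div_le_one hAs0).2 hxA
      have := hconv.2 (Set.mem_Icc.2 ⟨le_refl 0, hAs0.le⟩)
        (Set.mem_Icc.2 ⟨hAs0.le, le_refl A_s⟩) (sub_nonneg.2 ht1) ht0
        (by ring)
      have hxeq : (1 - x / A_s) • (0:ℝ) + (x / A_s) • A_s = x := by
        rw [smul_zero, zero_add, smul_eq_mul, div_mul_cancel₀ x hAs0.ne']
      rw [hxeq] at this
      calc f x ≤ (1 - x / A_s) * f 0 + (x / A_s) * f A_s := this
        _ = f 0 + c * x := by rw [hc]; ring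
    · rw [hsat x hxA.le]
      have : f A_s = f 0 + c * A_s := by rw [hc, div_mul_cancel₀ _ hAs0.ne']; ring
      rw [this]
      have := mul_le_mul_of_nonneg_left hxA.le hc0
      linarith
  have hg : Integrable (fun x => f 0 + c * x) μ := by
    exact (integrable_const (f 0)).add (hμid.const_mul c)
  have hle : (∫ x, f x ∂μ) ≤ ∫ x, f 0 + c * x ∂μ := by
    apply integral_mono_ae hμf hg
    filter_upwards [hμae] with x hx using hpt x hx
  have : (∫ x, f 0 + c * x ∂μ) = f 0 + c * ∫ x, x ∂μ := by
    rw [integral_add (integrable_const _) (hμid.const_mul c), integral_const,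
      integral_const_mul]
    simp [hμp.measure_univ]
  rw [this] at hle
  have : f 0 + c * ∫ x, x ∂μ ≤ f 0 + c * A_ν :=
    add_le_add_right (mul_le_mul_of_nonneg_left hμx hc0) _
  have hfin : f 0 + c * A_ν = β * f 0 + (1 - β) * f A_s := by
    rw [hβ1]; show f 0 + c * A_ν = (A_s - A_ν) / A_s * f 0 + A_ν / A_s * f A_s
    rw [hc]; linear_combination (-(f 0)) * (mul_inv_cancel₀ hAs0.ne')
  linarith
end

section
/- Let φ : [0,∞) → ℝ be non-decreasing with φ(0) ≥ 0, let A_s > 0, and suppose φ(u) ≥ φ(A_s²)·(u/A_s²)² for all u ∈ [0, A_s²], with φ(u) = φ(A_s²) for u ≥ A_s². Let |g₁| ≥ |g₂| > 0, ρ_min = A_s²/|g₁|², ρ_max = A_s²/|g₂|², and Φ(ν) = φ(ν|g₁|²) + φ(ν|g₂|²). Then Φ(ρ_min)/ρ_min ≥ Φ(ρ_max)/ρ_max. -/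
theorem stmt_7 (φ : ℝ → ℝ) (hmono : MonotoneOn φ (Set.Ici 0)) (hφ0 : 0 ≤ φ 0)
    (A_s : ℝ) (hAs : 0 < A_s)
    (hquad : ∀ u ∈ Set.Icc (0:ℝ) (A_s ^ 2), φ (A_s ^ 2) * (u / A_s ^ 2) ^ 2 ≤ φ u)
    (hsat : ∀ u : ℝ, A_s ^ 2 ≤ u → φ u = φ (A_s ^ 2))
    (g₁ g₂ : ℝ) (hg2 : 0 < g₂) (hg12 : g₂ ≤ g₁) :
    let ρmin : ℝ := A_s ^ 2 / g₁ ^ 2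
    let ρmax : ℝ := A_s ^ 2 / g₂ ^ 2
    let Φ : ℝ → ℝ := fun ν => φ (ν * g₁ ^ 2) + φ (ν * g₂ ^ 2)
    Φ ρmax / ρmax ≤ Φ ρmin / ρmin := by
  intro ρmin ρmax Φ
  have hg1 : 0 < g₁ := lt_of_lt_of_le hg2 hg12
  have hA2 : 0 < A_s ^ 2 := by positivity
  have hg1sq : 0 < g₁ ^ 2 := by positivity
  have hg2sq : 0 < g₂ ^ 2 := by positivity
  have hgsq : g₂ ^ 2 ≤ g₁ ^ 2 := by nlinarith
  have hρmin : 0 < ρmin := by positivity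
  have hρmax : 0 < ρmax := by positivity
  -- φ(A_s²) ≥ 0
  have hφA : 0 ≤ φ (A_s ^ 2) :=
    le_trans hφ0 (hmono (Set.mem_Ici.2 le_rfl) (Set.mem_Ici.2 hA2.le) hA2.le)
  -- ρmax * g₁² ≥ A_s²
  have h1 : φ (ρmax * g₁ ^ 2) = φ (A_s ^ 2) := by
    apply hsat
    rw [div_mul_eq_mul_div, le_div_iff₀ hg2sq]
    nlinarith
  have h2 : φ (ρmax * g₂ ^ 2) = φ (A_s ^ 2) := by
    rw [div_mul_cancel₀ _ (ne_of_gt hg2sq)]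
  have h3 : φ (ρmin * g₁ ^ 2) = φ (A_s ^ 2) := by
    rw [div_mul_cancel₀ _ (ne_of_gt hg1sq)]
  set u : ℝ := ρmin * g₂ ^ 2 with hu
  have hu0 : 0 ≤ u := by positivity
  have huA : u ≤ A_s ^ 2 := by
    rw [hu]
    rw [div_mul_eq_mul_div, div_le_iff₀ hg1sq]
    nlinarith
  have h4 : φ (A_s ^ 2) * (u / A_s ^ 2) ^ 2 ≤ φ u := hquad u ⟨hu0, huA⟩
  have huval : u / A_s ^ 2 = g₂ ^ 2 / g₁ ^ 2 := by
    field_simp [hu, ρmin]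
    rw [hu]; show A_s ^ 2 / g₁ ^ 2 * g₂ ^ 2 * g₁ ^ 2 = A_s ^ 2 * g₂ ^ 2
    rw [div_mul_eq_mul_div, div_mul_cancel₀ _ (ne_of_gt hg1sq)]
  rw [huval] at h4
  show (φ (ρmax * g₁ ^ 2) + φ (ρmax * g₂ ^ 2)) / ρmax ≤ (φ (ρmin * g₁ ^ 2) + φ u) / ρmin
  rw [h1, h2, h3, div_le_div_iff₀ hρmax hρmin]
  have key : φ (A_s ^ 2) * (g₂ ^ 2) ^ 2 / (g₁ ^ 2) ^ 2 ≤ φ u := by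
    rw [mul_div_assoc, ← div_pow]; exact h4
  have h5 : φ (A_s ^ 2) * (g₂ ^ 2) ^ 2 ≤ φ u * (g₁ ^ 2) ^ 2 := by
    rw [div_le_iff₀ (by positivity)] at key
    linarith
  have goal2 : 2 * φ (A_s ^ 2) * g₂ ^ 2 ≤ (φ (A_s ^ 2) + φ u) * g₁ ^ 2 := by
    nlinarith [mul_nonneg hφA (sq_nonneg (g₁ ^ 2 - g₂ ^ 2)), mul_pos hg1sq hg2sq]
  have final := mul_le_mul_of_nonneg_right goal2
    (le_of_lt (show (0:ℝ) < A_s ^ 2 / (g₁ ^ 2 * g₂ ^ 2) by positivity))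
  have e1 : (φ (A_s ^ 2) + φ (A_s ^ 2)) * ρmin
      = 2 * φ (A_s ^ 2) * g₂ ^ 2 * (A_s ^ 2 / (g₁ ^ 2 * g₂ ^ 2)) := by
    show (φ (A_s ^ 2) + φ (A_s ^ 2)) * (A_s ^ 2 / g₁ ^ 2) = _
    field_simp; ring
  have e2 : (φ (A_s ^ 2) + φ u) * ρmax
      = (φ (A_s ^ 2) + φ u) * g₁ ^ 2 * (A_s ^ 2 / (g₁ ^ 2 * g₂ ^ 2)) := by
    show (φ (A_s ^ 2) + φ u) * (A_s ^ 2 / g₂ ^ 2) = _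
    field_simp
  linarith [e1, e2, final]
end

section
/- Let g ∈ ℂⁿ be nonzero, φ : [0,∞) → ℝ non-decreasing and measurable, P_x > 0, and let Φ(ν) = φ(ν‖g‖²). Then sup over distributions of random vectors x ∈ ℂⁿ with E[‖x‖²] ≤ P_x of E[φ(|⟨g,x⟩|²)] equals sup over distributions of nonnegative random variables ν with E[ν] ≤ P_x of E[Φ(ν)]. -/
open MeasureTheory

theorem stmt_12 {n : ℕ} (g : EuclideanSpace ℂ (Fin n)) (hg : g ≠ 0)
    [MeasurableSpace (EuclideanSpace ℂ (Fin n))] [BorelSpace (EuclideanSpace ℂ (Fin n))]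
    (φ : ℝ → ℝ) (hφ : MonotoneOn φ (Set.Ici 0)) (hφm : Measurable φ)
    (P_x : ℝ) (hP : 0 < P_x) :
    sSup {r : ℝ | ∃ μ : Measure (EuclideanSpace ℂ (Fin n)),
        IsProbabilityMeasure μ ∧ Integrable (fun x => ‖x‖ ^ 2) μ ∧
        (∫ x, ‖x‖ ^ 2 ∂μ) ≤ P_x ∧
        Integrable (fun x => φ (‖(inner ℂ g x : ℂ)‖ ^ 2)) μ ∧
        r = ∫ x, φ (‖(inner ℂ g x : ℂ)‖ ^ 2) ∂μ} =
    sSup {r : ℝ | ∃ μ : Measure ℝ,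
        IsProbabilityMeasure μ ∧ (∀ᵐ ν ∂μ, 0 ≤ ν) ∧
        Integrable (fun ν : ℝ => ν) μ ∧ (∫ ν, ν ∂μ) ≤ P_x ∧
        Integrable (fun ν : ℝ => φ (ν * ‖g‖ ^ 2)) μ ∧
        r = ∫ ν, φ (ν * ‖g‖ ^ 2) ∂μ} := by
  have hgn : (0:ℝ) < ‖g‖ := norm_pos_iff.mpr hg
  have hg2 : (0:ℝ) < ‖g‖ ^ 2 := by positivity
  congr 1
  ext r
  simp only [Set.mem_setOf_eq]
  constructor
  · rintro ⟨μ, hprob, hint2, hle, hintφ, hr⟩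
    set F : EuclideanSpace ℂ (Fin n) → ℝ := fun x => ‖(inner ℂ g x : ℂ)‖ ^ 2 / ‖g‖ ^ 2 with hF
    have hFc : Continuous F := by
      apply Continuous.div_const
      exact ((continuous_const.inner continuous_id).norm.pow 2)
    have hFnn : ∀ x, 0 ≤ F x := fun x => by positivity
    have hFle : ∀ x, F x ≤ ‖x‖ ^ 2 := by
      intro x
      rw [hF, div_le_iff₀ hg2]
      calc ‖(inner ℂ g x : ℂ)‖ ^ 2 ≤ (‖g‖ * ‖x‖) ^ 2 := by
            apply pow_le_pow_left₀ (norm_nonneg _)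
            exact norm_inner_le_norm g x
        _ = ‖x‖ ^ 2 * ‖g‖ ^ 2 := by ring
    have hFmul : ∀ x, F x * ‖g‖ ^ 2 = ‖(inner ℂ g x : ℂ)‖ ^ 2 := by
      intro x; rw [hF]; field_simp
    have hFint : Integrable F μ := by
      apply hint2.mono hFc.aestronglyMeasurable
      filter_upwards with x
      rw [Real.norm_eq_abs, Real.norm_eq_abs, abs_of_nonneg (hFnn x),
        abs_of_nonneg (by positivity : (0:ℝ) ≤ ‖x‖ ^ 2)]
      exact hFle x
    refine ⟨Measure.map F μ, Measure.isProbabilityMeasure_map hFc.aemeasurable, ?_, ?_, ?_, ?_, ?_⟩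
    · rw [ae_map_iff hFc.aemeasurable measurableSet_Ici]
      exact Filter.Eventually.of_forall (fun x => hFnn x)
    · show Integrable id (Measure.map F μ)
      rwa [integrable_map_measure aestronglyMeasurable_id hFc.aemeasurable]
    · show (∫ ν, id ν ∂Measure.map F μ) ≤ P_x
      rw [integral_map hFc.aemeasurable aestronglyMeasurable_id]
      exact le_trans (integral_mono hFint hint2 hFle) hle
    · have hφg : Measurable fun ν : ℝ => φ (ν * ‖g‖ ^ 2) :=
        hφm.comp (measurable_mul_const _)
      rw [integrable_map_measure hφg.aestronglyMeasurable hFc.aemeasurable]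
      have : ((fun ν : ℝ => φ (ν * ‖g‖ ^ 2)) ∘ F) = fun x => φ (‖(inner ℂ g x : ℂ)‖ ^ 2) := by
        funext x; simp only [Function.comp_apply, hFmul x]
      rwa [this]
    · have hφg : Measurable fun ν : ℝ => φ (ν * ‖g‖ ^ 2) :=
        hφm.comp (measurable_mul_const _)
      rw [integral_map hFc.aemeasurable hφg.aestronglyMeasurable]
      simp_rw [hFmul]
      exact hr
  · rintro ⟨μ, hprob, hae, hint1, hle, hintφ, hr⟩
    set T : ℝ → EuclideanSpace ℂ (Fin n) :=
      fun ν => ((Real.sqrt (max ν 0) / ‖g‖ : ℝ) : ℂ) • g with hT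
    have hTc : Continuous T := by
      apply Continuous.smul (f := fun ν : ℝ => ((Real.sqrt (max ν 0) / ‖g‖ : ℝ) : ℂ)) _ continuous_const
      exact Complex.continuous_ofReal.comp
        (((continuous_id.max continuous_const).sqrt).div_const _)
    have hTnorm : ∀ ν, ‖T ν‖ ^ 2 = max ν 0 := by
      intro ν
      rw [hT]
      simp only [norm_smul, Complex.norm_real, Real.norm_eq_abs]
      rw [abs_of_nonneg (by positivity : (0:ℝ) ≤ Real.sqrt (max ν 0) / ‖g‖),
        div_mul_cancel₀ _ hgn.ne', Real.sq_sqrt (le_max_right ν 0)]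
    have hTinner : ∀ ν, ‖(inner ℂ g (T ν) : ℂ)‖ ^ 2 = max ν 0 * ‖g‖ ^ 2 := by
      intro ν
      rw [hT]
      simp only [inner_smul_right]
      rw [norm_mul, Complex.norm_real, Real.norm_eq_abs,
        abs_of_nonneg (by positivity : (0:ℝ) ≤ Real.sqrt (max ν 0) / ‖g‖),
        @inner_self_eq_norm_sq_to_K ℂ, norm_pow, RCLike.norm_ofReal,
        abs_of_nonneg hgn.le]
      rw [mul_pow, div_pow, Real.sq_sqrt (le_max_right ν 0)]
      field_simp
    have haemax : ∀ᵐ ν ∂μ, max ν 0 = ν := by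
      filter_upwards [hae] with ν hν
      exact max_eq_left hν
    refine ⟨Measure.map T μ, Measure.isProbabilityMeasure_map hTc.aemeasurable, ?_, ?_, ?_, ?_⟩
    · rw [integrable_map_measure (show Continuous fun x : EuclideanSpace ℂ (Fin n) => ‖x‖ ^ 2 from continuous_norm.pow 2).aestronglyMeasurable
        hTc.aemeasurable]
      apply hint1.congr
      filter_upwards [haemax] with ν hν
      simp only [Function.comp_apply, hTnorm ν, hν]
    · rw [integral_map hTc.aemeasurable (show Continuous fun x : EuclideanSpace ℂ (Fin n) => ‖x‖ ^ 2 from continuous_norm.pow 2).aestronglyMeasurable]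
      have : ∫ ν, ‖T ν‖ ^ 2 ∂μ = ∫ ν, ν ∂μ := by
        apply integral_congr_ae
        filter_upwards [haemax] with ν hν
        rw [hTnorm ν, hν]
      rw [this]; exact hle
    · have hm : AEStronglyMeasurable (fun x : EuclideanSpace ℂ (Fin n) =>
          φ (‖(inner ℂ g x : ℂ)‖ ^ 2)) (Measure.map T μ) := by
        apply AEStronglyMeasurable.comp_aemeasurable hφm.aestronglyMeasurable
        exact ((continuous_const.inner continuous_id).norm.pow 2).aemeasurable
      rw [integrable_map_measure hm hTc.aemeasurable]
      apply hintφ.congr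
      filter_upwards [haemax] with ν hν
      simp only [Function.comp_apply, hTinner ν, hν]
    · rw [integral_map hTc.aemeasurable]
      · rw [hr]
        apply integral_congr_ae
        filter_upwards [haemax] with ν hν
        simp only [Function.comp_apply, hTinner ν, hν]
      · apply AEStronglyMeasurable.comp_aemeasurable hφm.aestronglyMeasurable
        exact ((continuous_const.inner continuous_id).norm.pow 2).aemeasurable
end
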